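/- For all positive integers r, ℓ, s there exists a positive integer n = n(r,ℓ,s) such that for every coloring g of the interval [1,n] in r colors there exist positives integers a, b such that the set {a, a+b, a+2b, ..., a+(ℓ-1)b} ∪ {s·b} is contained in [1,n] and is monochromatic under g (i.e., g is constant on this set). -/
import Mathlib

open Filter

/-- compactness: infinite statement implies finitary statement -/
lemma brauer_compact (r l s : ℕ) (hs : 0 < s)
    (H : ∀ g : ℕ → Fin r, ∃ a b : ℕ, 0 < a ∧ 0 < b ∧
      ∀ x ∈ insert (s * b) ((Finset.range l).image fun i => a + i * b),
        ∀ y ∈ insert (s * b) ((Finset.range l).image fun i => a + i * b),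
          g x = g y) :
    ∃ n : ℕ, 0 < n ∧ ∀ g : ℕ → Fin r, ∃ a b : ℕ, 0 < a ∧ 0 < b ∧
      (∀ i < l, a + i * b ∈ Finset.Icc 1 n) ∧ s * b ∈ Finset.Icc 1 n ∧
      ∀ x ∈ insert (s * b) ((Finset.range l).image fun i => a + i * b),
        ∀ y ∈ insert (s * b) ((Finset.range l).image fun i => a + i * b),
          g x = g y := by
  by_contra hcon
  push_neg at hcon
  -- for every n, a bad coloring
  have hbad : ∀ n : ℕ, ∃ g : ℕ → Fin r, ∀ a b : ℕ, 0 < a → 0 < b →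
      (∀ i < l, a + i * b ∈ Finset.Icc 1 (n+1)) → s * b ∈ Finset.Icc 1 (n+1) →
      ¬ (∀ x ∈ insert (s * b) ((Finset.range l).image fun i => a + i * b),
        ∀ y ∈ insert (s * b) ((Finset.range l).image fun i => a + i * b),
          g x = g y) := by
    intro n
    obtain ⟨g, hg⟩ := hcon (n+1) (Nat.succ_pos n)
    exact ⟨g, fun a b ha hb h1 h2 hmono => by
      obtain ⟨x, hx, y, hy, hxy⟩ := hg a b ha hb h1 h2
      exact hxy (hmono x hx y hy)⟩
  choose G hG using hbad
  have : Nonempty (Fin r) := ⟨G 0 0⟩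
  set U : Ultrafilter ℕ := hyperfilter ℕ with hU
  -- define limit coloring
  have hv : ∀ k : ℕ, ∃ v : Fin r, {n : ℕ | G n k = v} ∈ U := by
    intro k
    have : (⋃ v ∈ (Set.univ : Set (Fin r)), {n : ℕ | G n k = v}) ∈ U := by
      have : (⋃ v ∈ (Set.univ : Set (Fin r)), {n : ℕ | G n k = v}) = Set.univ := by
        ext n; simp
      rw [this]; exact Filter.univ_mem
    obtain ⟨v, _, hv⟩ := (Ultrafilter.finite_biUnion_mem_iff Set.finite_univ).mp this
    exact ⟨v, hv⟩
  choose g hgv using hv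
  obtain ⟨a, b, ha, hb, hmono⟩ := H g
  set S := insert (s * b) ((Finset.range l).image fun i => a + i * b) with hS
  set N := a + l * b + s * b with hN
  have hagree : ∀ᶠ n in (U : Filter ℕ), ∀ k ∈ (S : Set ℕ), G n k = g k :=
    (Set.Finite.eventually_all (S.finite_toSet)).mpr fun k _ => hgv k
  have hge : ∀ᶠ n in (U : Filter ℕ), N ≤ n :=
    (Filter.eventually_ge_atTop N).filter_mono Nat.hyperfilter_le_atTop
  obtain ⟨n, hn1, hn2⟩ := (hagree.and hge).exists
  -- bounds
  have hbound : ∀ k ∈ S, k ∈ Finset.Icc 1 (n+1) := by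
    intro k hk
    simp only [hS, Finset.mem_insert, Finset.mem_image, Finset.mem_range] at hk
    rcases hk with rfl | ⟨i, hi, rfl⟩
    · refine Finset.mem_Icc.mpr ⟨Nat.one_le_iff_ne_zero.mpr (by positivity), ?_⟩
      omega
    · refine Finset.mem_Icc.mpr ⟨by omega, ?_⟩
      have : i * b ≤ l * b := Nat.mul_le_mul_right b hi.le
      omega
  refine hG n a b ha hb ?_ ?_ ?_
  · intro i hi
    exact hbound _ (Finset.mem_insert_of_mem (Finset.mem_image.mpr ⟨i, Finset.mem_range.mpr hi, rfl⟩))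
  · exact hbound _ (Finset.mem_insert_self _ _)
  · intro x hx y hy
    rw [hn1 x hx, hn1 y hy]
    exact hmono x hx y hy


open Filter Finset

section
variable (l s : ℕ)

lemma brauer_step (hl : 0 < l) (hs : 0 < s) (r M : ℕ) (hM : 0 < M)
    (hFM : ∀ g : ℕ → Fin (r+1), ∃ a b : ℕ, 0 < a ∧ 0 < b ∧
      (∀ i < l, a + i * b ∈ Finset.Icc 1 M) ∧ s * b ∈ Finset.Icc 1 M ∧
      ∀ x ∈ insert (s * b) ((Finset.range l).image fun i => a + i * b),
        ∀ y ∈ insert (s * b) ((Finset.range l).image fun i => a + i * b),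
          g x = g y)
    (g : ℕ → Fin (r+2)) :
    ∃ a b : ℕ, 0 < a ∧ 0 < b ∧
      ∀ x ∈ insert (s * b) ((Finset.range l).image fun i => a + i * b),
        ∀ y ∈ insert (s * b) ((Finset.range l).image fun i => a + i * b),
          g x = g y := by
  obtain ⟨d, hd, e, c, hc⟩ :=
    Combinatorics.exists_mono_homothetic_copy (Finset.range (l*M*s+2)) g
  simp only [Finset.mem_range, smul_eq_mul] at hc
  by_cases hcase : ∃ j ∈ Finset.Icc 1 M, g (s*(j*d)) = c
  · obtain ⟨j, hj, hjc⟩ := hcase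
    obtain ⟨hj1, hj2⟩ := Finset.mem_Icc.mp hj
    refine ⟨e + d, j*d, by omega, Nat.mul_pos (by omega) hd, ?_⟩
    have key : ∀ x ∈ insert (s*(j*d)) ((Finset.range l).image fun i => (e+d) + i*(j*d)),
        g x = c := by
      intro x hx
      rcases Finset.mem_insert.mp hx with rfl | hx
      · exact hjc
      · obtain ⟨k, hk, rfl⟩ := Finset.mem_image.mp hx
        have hk' : k < l := Finset.mem_range.mp hk
        have heq : (e+d) + k*(j*d) = d*(1+k*j) + e := by ring
        rw [heq]
        refine hc (1+k*j) ?_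
        have h1 : k*j ≤ l*M := Nat.mul_le_mul (by omega) hj2
        have h2 : l*M ≤ l*M*s := Nat.le_mul_of_pos_right _ hs
        omega
    intro x hx y hy
    rw [key x hx, key y hy]
  · push_neg at hcase
    have hne : ∀ j ∈ Finset.Icc 1 M, ∃ z : Fin (r+1), c.succAbove z = g (s*(j*d)) :=
      fun j hj => Fin.exists_succAbove_eq (hcase j hj)
    classical
    set h : ℕ → Fin (r+1) := fun j =>
      if hj : j ∈ Finset.Icc 1 M then (hne j hj).choose else 0 with hhdef
    have hh : ∀ j ∈ Finset.Icc 1 M, Fin.succAbove c (h j) = g (s*(j*d)) := by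
      intro j hj
      simp only [hhdef, dif_pos hj]
      exact (hne j hj).choose_spec
    obtain ⟨a', b', ha', hb', hbd1, hbd2, hmono'⟩ := hFM h
    have hIcc : ∀ j ∈ insert (s*b') ((Finset.range l).image fun i => a' + i*b'),
        j ∈ Finset.Icc 1 M := by
      intro j hj
      rcases Finset.mem_insert.mp hj with rfl | hj
      · exact hbd2
      · obtain ⟨k, hk, rfl⟩ := Finset.mem_image.mp hj
        exact hbd1 k (Finset.mem_range.mp hk)
    have hgv : ∀ j ∈ insert (s*b') ((Finset.range l).image fun i => a' + i*b'),
        g (s*(j*d)) = Fin.succAbove c (h (s*b')) := by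
      intro j hj
      rw [← hh j (hIcc j hj)]
      rw [hmono' j hj (s*b') (Finset.mem_insert_self _ _)]
    refine ⟨s*(a'*d), s*(b'*d), by positivity, by positivity, ?_⟩
    have key : ∀ x ∈ insert (s*(s*(b'*d)))
        ((Finset.range l).image fun i => s*(a'*d) + i*(s*(b'*d))),
        g x = Fin.succAbove c (h (s*b')) := by
      intro x hx
      rcases Finset.mem_insert.mp hx with rfl | hx
      · have heq : s*(s*(b'*d)) = s*((s*b')*d) := by ring
        rw [heq]
        exact hgv (s*b') (Finset.mem_insert_self _ _)
      · obtain ⟨k, hk, rfl⟩ := Finset.mem_image.mp hx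
        have heq : s*(a'*d) + k*(s*(b'*d)) = s*((a'+k*b')*d) := by ring
        rw [heq]
        exact hgv (a'+k*b')
          (Finset.mem_insert_of_mem (Finset.mem_image.mpr ⟨k, hk, rfl⟩))
    intro x hx y hy
    rw [key x hx, key y hy]

end

lemma brauer_induct (l s : ℕ) (hl : 0 < l) (hs : 0 < s) (r : ℕ) :
    ∃ n : ℕ, 0 < n ∧ ∀ g : ℕ → Fin (r+1), ∃ a b : ℕ, 0 < a ∧ 0 < b ∧
      (∀ i < l, a + i * b ∈ Finset.Icc 1 n) ∧ s * b ∈ Finset.Icc 1 n ∧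
      ∀ x ∈ insert (s * b) ((Finset.range l).image fun i => a + i * b),
        ∀ y ∈ insert (s * b) ((Finset.range l).image fun i => a + i * b),
          g x = g y := by
  induction r with
  | zero =>
    refine ⟨max l s, by omega, fun g => ⟨1, 1, one_pos, one_pos, ?_, ?_, ?_⟩⟩
    · intro i hi
      refine Finset.mem_Icc.mpr ⟨by omega, ?_⟩
      have : i + 1 ≤ l := hi
      omega
    · refine Finset.mem_Icc.mpr ⟨by omega, by omega⟩
    · intro x _ y _
      exact Fin.fin_one_eq_zero (g x) ▸ (Fin.fin_one_eq_zero (g y)).symm ▸ rfl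
  | succ r ih =>
    obtain ⟨M, hM, hFM⟩ := ih
    exact brauer_compact (r+2) l s hs (brauer_step l s hl hs r M hM hFM)

/-- **Brauer's Theorem.** For all positive `r, l, s` there is `n` such that every
`r`-coloring of `[1, n]` admits `a, b > 0` with
`{a, a+b, ..., a+(l-1)b} ∪ {s*b} ⊆ [1, n]` monochromatic. -/
theorem brauer_theorem (r l s : ℕ) (hr : 0 < r) (hl : 0 < l) (hs : 0 < s) :
    ∃ n : ℕ, 0 < n ∧ ∀ g : ℕ → Fin r, ∃ a b : ℕ, 0 < a ∧ 0 < b ∧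
      (∀ i < l, a + i * b ∈ Finset.Icc 1 n) ∧ s * b ∈ Finset.Icc 1 n ∧
      ∀ x ∈ insert (s * b) ((Finset.range l).image fun i => a + i * b),
        ∀ y ∈ insert (s * b) ((Finset.range l).image fun i => a + i * b),
          g x = g y := by
  obtain ⟨r', rfl⟩ : ∃ r', r = r' + 1 := ⟨r - 1, by omega⟩
  exact brauer_induct l s hl hs r'
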